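/- arXiv:1610.08295 — 3 statements merged into one kernel-verified Lean document; each statement's English description precedes it below -/
import Mathlib

section
/- Fix ε ∈ (0,1) and λ > 0 and an integer N ≥ 2 with ε = 1/N. The equation J'(√(|log ε|/ε)·(λ-w)/(N-1)) = J'(√(|log ε|/ε)·w), for w ∈ ℝ, is satisfied by w = ελ and by w_{1,2} = λ/2 ± √(λ²/4 - (1-ε)/|log ε|), provided λ² /4 ≥ (1-ε)/|log ε|. -/
open Real

noncomputable def J' (z : ℝ) : ℝ := 2 * z / (1 + z ^ 2)

lemma J'_inv (a b : ℝ) (h : a * b = 1) : J' a = J' b := by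
  unfold J'
  rw [div_eq_div_iff (by positivity) (by positivity)]
  linear_combination (2 * b - 2 * a) * h

theorem stationary_solutions (ε lam : ℝ) (N : ℕ) (hε : ε ∈ Set.Ioo (0 : ℝ) 1)
    (hlam : 0 < lam) (hN : 2 ≤ N) (hεN : ε = 1 / (N : ℝ))
    (hdisc : lam ^ 2 / 4 ≥ (1 - ε) / (-Real.log ε)) :
    (J' (Real.sqrt ((-Real.log ε) / ε) * (lam - ε * lam) / ((N : ℝ) - 1)) =
      J' (Real.sqrt ((-Real.log ε) / ε) * (ε * lam))) ∧
    (∀ w : ℝ,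
      (w = lam / 2 + Real.sqrt (lam ^ 2 / 4 - (1 - ε) / (-Real.log ε)) ∨
       w = lam / 2 - Real.sqrt (lam ^ 2 / 4 - (1 - ε) / (-Real.log ε))) →
      J' (Real.sqrt ((-Real.log ε) / ε) * (lam - w) / ((N : ℝ) - 1)) =
        J' (Real.sqrt ((-Real.log ε) / ε) * w)) := by
  obtain ⟨hε0, hε1⟩ := hε
  have hL : 0 < -Real.log ε := by
    have := Real.log_neg hε0 hε1
    linarith
  have hNpos : (0 : ℝ) < (N : ℝ) := by positivity
  have hεN' : ε * (N : ℝ) = 1 := by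
    rw [hεN]; field_simp
  have hN1 : (N : ℝ) - 1 ≠ 0 := by
    have : (2 : ℝ) ≤ (N : ℝ) := by exact_mod_cast hN
    linarith
  set c : ℝ := Real.sqrt ((-Real.log ε) / ε) with hcdef
  have hc2 : c ^ 2 = (-Real.log ε) / ε := Real.sq_sqrt (by positivity)
  constructor
  · have harg : c * (lam - ε * lam) / ((N : ℝ) - 1) = c * (ε * lam) := by
      rw [div_eq_iff hN1]
      linear_combination (-(c * lam)) * hεN'
    rw [harg]
  · intro w hw
    set s : ℝ := Real.sqrt (lam ^ 2 / 4 - (1 - ε) / (-Real.log ε)) with hsdef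
    have hs2 : s ^ 2 = lam ^ 2 / 4 - (1 - ε) / (-Real.log ε) :=
      Real.sq_sqrt (by linarith)
    have hwprod : w * (lam - w) = (1 - ε) / (-Real.log ε) := by
      rcases hw with h | h <;> rw [h] <;> nlinarith [hs2]
    apply J'_inv
    have : c * (lam - w) / ((N : ℝ) - 1) * (c * w) =
        c ^ 2 * (w * (lam - w)) / ((N : ℝ) - 1) := by ring
    rw [this, hc2, hwprod]
    have hεne : ε ≠ 0 := ne_of_gt hε0
    have key : -Real.log ε / ε * ((1 - ε) / -Real.log ε) = (N : ℝ) - 1 := by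
      rw [div_mul_div_comm, div_eq_iff (mul_ne_zero hεne (ne_of_gt hL))]
      linear_combination (Real.log ε) * hεN'
    rw [key, div_self hN1]
end

section
/- Let p : (0,1) → (0,∞) satisfy lim_{ε→0⁺} p(ε) = 0 and lim_{ε→0⁺}(p(ε)|log ε| - log|log ε|) = +∞, and set c_ε = ε^{p(ε)}. Then lim_{ε→0⁺} (1/|log ε|)·log(1 + (|log ε|/ε)·c_ε²) = 1. -/
open Real Filter Set

theorem morini_negri_part2 (p : ℝ → ℝ)
    (hp_pos : ∀ ε ∈ Set.Ioo (0 : ℝ) 1, 0 < p ε)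
    (hp0 : Tendsto p (nhdsWithin 0 (Set.Ioo 0 1)) (nhds 0))
    (hp1 : Tendsto (fun ε : ℝ => p ε * (-Real.log ε) - Real.log (-Real.log ε))
      (nhdsWithin 0 (Set.Ioo 0 1)) atTop) :
    Tendsto (fun ε : ℝ =>
        (1 / (-Real.log ε)) * Real.log (1 + ((-Real.log ε) / ε) * (ε ^ (p ε)) ^ 2))
      (nhdsWithin 0 (Set.Ioo 0 1)) (nhds 1) := by
  set F := nhdsWithin (0:ℝ) (Set.Ioo 0 1) with hF
  have hL : Tendsto (fun ε : ℝ => -Real.log ε) F atTop := by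
    have h1 : Tendsto Real.log F atBot :=
      Real.tendsto_log_nhdsGT_zero.mono_left
        (nhdsWithin_mono _ (fun x hx => hx.1))
    exact tendsto_neg_atBot_atTop.comp h1
  have hlogdiv : Tendsto (fun ε : ℝ => Real.log (-Real.log ε) / (-Real.log ε)) F (nhds 0) := by
    have := Real.isLittleO_log_id_atTop.tendsto_div_nhds_zero
    exact (this.comp hL)
  have hlo : Tendsto (fun ε : ℝ => Real.log (-Real.log ε) / (-Real.log ε) + (1 - 2 * p ε))
      F (nhds 1) := by
    have : Tendsto (fun ε : ℝ => 1 - 2 * p ε) F (nhds 1) := by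
      have := (tendsto_const_nhds (x := (1:ℝ)) (f := F)).sub ((hp0.const_mul 2))
      simpa using this
    simpa using hlogdiv.add this
  have hhi : Tendsto (fun ε : ℝ => Real.log 2 / (-Real.log ε) +
      (Real.log (-Real.log ε) / (-Real.log ε) + (1 - 2 * p ε))) F (nhds 1) := by
    have h2 : Tendsto (fun ε : ℝ => Real.log 2 / (-Real.log ε)) F (nhds 0) :=
      Tendsto.div_atTop tendsto_const_nhds hL
    simpa using h2.add hlo
  -- eventual facts
  have hmem : ∀ᶠ ε in F, ε ∈ Set.Ioo (0:ℝ) 1 := self_mem_nhdsWithin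
  have hLge : ∀ᶠ ε in F, (1:ℝ) ≤ -Real.log ε := hL.eventually_ge_atTop 1
  have hpsmall : ∀ᶠ ε in F, p ε < 1/4 := hp0.eventually (gt_mem_nhds (by norm_num))
  have key : ∀ᶠ ε in F,
      Real.log (-Real.log ε) / (-Real.log ε) + (1 - 2 * p ε) ≤
        (1 / (-Real.log ε)) * Real.log (1 + ((-Real.log ε) / ε) * (ε ^ (p ε)) ^ 2) ∧
      (1 / (-Real.log ε)) * Real.log (1 + ((-Real.log ε) / ε) * (ε ^ (p ε)) ^ 2) ≤
        Real.log 2 / (-Real.log ε) +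
          (Real.log (-Real.log ε) / (-Real.log ε) + (1 - 2 * p ε)) := by
    filter_upwards [hmem, hLge, hpsmall] with ε hε hL1 hps
    obtain ⟨hε0, hε1⟩ := hε
    set L := -Real.log ε with hLdef
    have hLpos : 0 < L := lt_of_lt_of_le one_pos hL1
    have hεexp : ε = Real.exp (-L) := by
      rw [hLdef, neg_neg, Real.exp_log hε0]
    have hrpow : (ε ^ (p ε)) ^ 2 = Real.exp (-(2 * p ε * L)) := by
      rw [Real.rpow_def_of_pos hε0, ← Real.exp_nat_mul]
      congr 1
      have : Real.log ε = -L := by rw [hLdef]; ring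
      rw [this]; push_cast; ring
    have hdiv : L / ε = L * Real.exp L := by
      rw [hεexp, Real.exp_neg]
      field_simp
    have hinner : L / ε * (ε ^ (p ε)) ^ 2 = L * Real.exp ((1 - 2 * p ε) * L) := by
      rw [hdiv, hrpow, mul_assoc, ← Real.exp_add]
      ring_nf
    set A := L * Real.exp ((1 - 2 * p ε) * L) with hA
    have hApos : 0 < A := mul_pos hLpos (Real.exp_pos _)
    have hA1 : 1 ≤ A := by
      have h1 : (1:ℝ) ≤ Real.exp ((1 - 2 * p ε) * L) := by
        rw [Real.one_le_exp_iff]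
        have : 0 ≤ (1 - 2 * p ε) := by linarith
        positivity
      calc (1:ℝ) = 1 * 1 := by ring
        _ ≤ L * Real.exp ((1 - 2 * p ε) * L) := by
            apply mul_le_mul hL1 h1 one_pos.le hLpos.le
    have hlogA : Real.log A = Real.log L + (1 - 2 * p ε) * L := by
      rw [hA, Real.log_mul hLpos.ne' (Real.exp_pos _).ne', Real.log_exp]
    rw [hinner]
    constructor
    · have h1 : Real.log A ≤ Real.log (1 + A) :=
        Real.log_le_log hApos (by linarith)
      
      calc Real.log L / L + (1 - 2 * p ε) = Real.log A / L := by
            rw [hlogA]; field_simp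
        _ ≤ Real.log (1 + A) / L := by
            apply div_le_div_of_nonneg_right h1 hLpos.le
        _ = 1 / L * Real.log (1 + A) := by ring
    · have h2 : Real.log (1 + A) ≤ Real.log 2 + Real.log A := by
        rw [← Real.log_mul two_ne_zero hApos.ne']
        apply Real.log_le_log (by linarith)
        linarith
      calc 1 / L * Real.log (1 + A) = Real.log (1 + A) / L := by ring
        _ ≤ (Real.log 2 + Real.log A) / L := by
            apply div_le_div_of_nonneg_right h2 hLpos.le
        _ = Real.log 2 / L + (Real.log L / L + (1 - 2 * p ε)) := by
            rw [hlogA]; field_simp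
    
  exact tendsto_of_tendsto_of_tendsto_of_le_of_le' hlo hhi
    (key.mono fun ε h => h.1) (key.mono fun ε h => h.2)
end

section
/- Let h : ℝ → ℝ be Lipschitz with Lipschitz constant L < 1, let C ∈ ℝ, and let (a_k) be a real sequence satisfying a_{k+1} - a_k + h(a_{k+1}) ≤ h(C) for all k ≥ 0. If a_0 ≤ C then a_k ≤ C for all k ≥ 0. -/
open Real

theorem comparison_lemma (h : ℝ → ℝ) (L : NNReal) (hL : (L : ℝ) < 1)
    (hLip : LipschitzWith L h) (C : ℝ) (a : ℕ → ℝ)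
    (ha : ∀ k : ℕ, a (k + 1) - a k + h (a (k + 1)) ≤ h C)
    (h0 : a 0 ≤ C) : ∀ k : ℕ, a k ≤ C := by
  intro k
  induction k with
  | zero => exact h0
  | succ n ih =>
    by_contra hc
    push_neg at hc
    have hd : h C - h (a (n + 1)) ≤ (L : ℝ) * (a (n + 1) - C) := by
      have := hLip.dist_le_mul C (a (n + 1))
      rw [Real.dist_eq, Real.dist_eq, abs_sub_comm C (a (n+1)),
        abs_of_pos (by linarith : a (n+1) - C > 0)] at this
      calc h C - h (a (n+1)) ≤ |h C - h (a (n+1))| := le_abs_self _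
        _ ≤ (L : ℝ) * (a (n+1) - C) := this
    have := ha n
    nlinarith [hc, ih]
end
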